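/- arXiv:2408.02154 — 2 statements merged into one kernel-verified Lean document; each statement's English description precedes it below -/
import Mathlib

section
/- Suppose W_δ(x, u) ≥ W_hom(u) - (L_δ(x) + L)|u - ⟨u⟩| pointwise on Q, where W_hom is L-Lipschitz and the Poincaré inequality with constant c_P δ^2 holds on Q. Then for every α > 0, ∫_Q (ε/2)|∇u|^2 + W_δ(x,u)/ε dx ≥ ∫_Q ((1 - c_P α)ε/2)|∇u|^2 + W_hom(u)/ε dx - C (δ/ε)^2 (1/(αε)) |Q| - |∫_Q (W_δ(x,⟨u⟩) - W_hom(⟨u⟩))/ε dx|, where C depends on the L^2-average of (L_δ + L)^2 over Q. -/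
open MeasureTheory

set_option maxHeartbeats 1000000 in
/-- Lemma `eps32` (cell-wise lower bound): `Q` open bounded with Poincaré constant
`c_P δ²`, `u ∈ H¹(Q; [-M,M])` with `g = |∇u|`, `m = ⟨u⟩` its mean over `Q`,
`W_δ` Lipschitz in `u` with constant `L_δ(x)`, `W_hom` `L`-Lipschitz, and
`C = (1/|Q|) ∫_Q (L_δ + L)²`. -/
theorem stmt4 (d : ℕ) (Q : Set (EuclideanSpace ℝ (Fin d))) (hQmeas : MeasurableSet Q)
    (hQopen : IsOpen Q) (hQbdd : Bornology.IsBounded Q)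
    (u g Lδ : EuclideanSpace ℝ (Fin d) → ℝ) (Wδ : EuclideanSpace ℝ (Fin d) → ℝ → ℝ)
    (Whom : ℝ → ℝ) (m cP δ ε α L M C : ℝ)
    (hε : 0 < ε) (hδ : 0 < δ) (hα : 0 < α) (hL : 0 ≤ L) (hcP : 0 ≤ cP) (hM : 0 < M)
    (hLδ : ∀ x, 0 ≤ Lδ x) (hg : ∀ x, 0 ≤ g x)
    (hm : m = (∫ x in Q, u x) / (volume Q).toReal)
    (hrange : ∀ x ∈ Q, u x ∈ Set.Icc (-M) M)
    (hWδLip : ∀ x ∈ Q, ∀ u₁ ∈ Set.Icc (-M) M, ∀ u₂ ∈ Set.Icc (-M) M,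
      |Wδ x u₁ - Wδ x u₂| ≤ Lδ x * |u₁ - u₂|)
    (hWhomLip : LipschitzWith (Real.toNNReal L) Whom)
    (hPoincare : ∫ x in Q, (u x - m) ^ 2 ≤ cP * δ ^ 2 * ∫ x in Q, g x ^ 2)
    (hC : C = (∫ x in Q, (Lδ x + L) ^ 2) / (volume Q).toReal)
    (hint1 : IntegrableOn (fun x => g x ^ 2) Q)
    (hint2 : IntegrableOn (fun x => Wδ x (u x)) Q)
    (hint3 : IntegrableOn (fun x => Whom (u x)) Q)
    (hint4 : IntegrableOn (fun x => Wδ x m) Q)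
    (hint5 : IntegrableOn (fun x => (Lδ x + L) ^ 2) Q)
    (hint6 : IntegrableOn (fun x => (u x - m) ^ 2) Q) :
    ∫ x in Q, (ε / 2 * g x ^ 2 + Wδ x (u x) / ε)
      ≥ (∫ x in Q, ((1 - cP * α) * ε / 2 * g x ^ 2 + Whom (u x) / ε))
        - C * (δ / ε) ^ 2 * (1 / (α * ε)) * (volume Q).toReal
        - |∫ x in Q, (Wδ x m - Whom m) / ε| := by
  have hVfin : volume Q < ⊤ := hQbdd.measure_lt_top
  by_cases hv0 : volume Q = 0
  · have hres : volume.restrict Q = 0 := Measure.restrict_eq_zero.mpr hv0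
    simp [hres, hv0]
  -- positive, finite volume
  have hVpos : 0 < (volume Q).toReal := ENNReal.toReal_pos hv0 hVfin.ne
  set V : ℝ := (volume Q).toReal with hV
  -- the mean lies in [-M, M]
  have hmean : |∫ x in Q, u x| ≤ M * V := by
    have := norm_setIntegral_le_of_norm_le_const (μ := volume) (f := u) hVfin
      (fun x hx => by
        have h := hrange x hx
        rw [Real.norm_eq_abs, abs_le]
        exact ⟨h.1, h.2⟩)
    simpa [measureReal_def, hV] using this
  have hmIcc : m ∈ Set.Icc (-M) M := by
    have : |m| ≤ M := by
      rw [hm, abs_div, abs_of_pos hVpos, div_le_iff₀ hVpos]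
      exact hmean
    exact abs_le.mp this
  -- Young's inequality parameter
  set t : ℝ := α * ε ^ 2 / δ ^ 2 with ht_def
  have ht : 0 < t := by positivity
  -- pointwise lower bound
  have hpt : ∀ x ∈ Q,
      Whom (u x) + (Wδ x m - Whom m)
        - ((Lδ x + L) ^ 2 / (2 * t) + t / 2 * (u x - m) ^ 2) ≤ Wδ x (u x) := by
    intro x hx
    have h1 : |Wδ x (u x) - Wδ x m| ≤ Lδ x * |u x - m| :=
      hWδLip x hx _ (hrange x hx) _ hmIcc
    have h1' : Wδ x m - Wδ x (u x) ≤ Lδ x * |u x - m| := (abs_sub_le_iff.mp h1).2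
    have h2 : |Whom (u x) - Whom m| ≤ L * |u x - m| := by
      have h := hWhomLip.dist_le_mul (u x) m
      rw [Real.dist_eq, Real.dist_eq, Real.coe_toNNReal L hL] at h
      exact h
    have h2' : Whom (u x) - Whom m ≤ L * |u x - m| := (abs_sub_le_iff.mp h2).1
    have hY : (Lδ x + L) * |u x - m| ≤ (Lδ x + L) ^ 2 / (2 * t) + t / 2 * (u x - m) ^ 2 := by
      have key : ∀ b : ℝ, (Lδ x + L) * b ≤ (Lδ x + L) ^ 2 / (2 * t) + t / 2 * b ^ 2 := by
        intro b
        rw [← sub_nonneg]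
        have hid : (Lδ x + L) ^ 2 / (2 * t) + t / 2 * b ^ 2 - (Lδ x + L) * b
            = (Lδ x + L - t * b) ^ 2 / (2 * t) := by
          field_simp; ring
        rw [hid]; positivity
      have h := key |u x - m|
      rwa [sq_abs] at h
    have hdist : (Lδ x + L) * |u x - m| = Lδ x * |u x - m| + L * |u x - m| := add_mul _ _ _
    linarith
  -- integrability of the minorant
  have hconst : IntegrableOn (fun _ : EuclideanSpace ℝ (Fin d) => Whom m) Q :=
    integrableOn_const hVfin.ne
  have hi34 : IntegrableOn (fun x => Wδ x m - Whom m) Q := hint4.sub hconst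
  have hi5 : IntegrableOn (fun x => (Lδ x + L) ^ 2 / (2 * t)) Q := hint5.div_const _
  have hi6 : IntegrableOn (fun x => t / 2 * (u x - m) ^ 2) Q := hint6.const_mul _
  have hiL : IntegrableOn (fun x => Whom (u x) + (Wδ x m - Whom m)) Q := hint3.add hi34
  have hiR : IntegrableOn (fun x => (Lδ x + L) ^ 2 / (2 * t) + t / 2 * (u x - m) ^ 2) Q :=
    hi5.add hi6
  have stepA :
      (∫ x in Q, (Whom (u x) + (Wδ x m - Whom m)
        - ((Lδ x + L) ^ 2 / (2 * t) + t / 2 * (u x - m) ^ 2)))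
        ≤ ∫ x in Q, Wδ x (u x) :=
    setIntegral_mono_on (hiL.sub hiR) hint2 hQmeas hpt
  rw [integral_sub hiL hiR, integral_add hint3 hi34,
    integral_add hi5 hi6, integral_div, integral_const_mul] at stepA
  -- abbreviations
  set A : ℝ := ∫ x in Q, g x ^ 2 with hA_def
  set B : ℝ := ∫ x in Q, (u x - m) ^ 2 with hB_def
  set D : ℝ := ∫ x in Q, (Lδ x + L) ^ 2 with hD_def
  set I₁ : ℝ := ∫ x in Q, Wδ x (u x) with hI1_def
  set I₂ : ℝ := ∫ x in Q, Whom (u x) with hI2_def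
  set I₃ : ℝ := ∫ x in Q, (Wδ x m - Whom m) with hI3_def
  have hA0 : 0 ≤ A := setIntegral_nonneg hQmeas fun x _ => sq_nonneg _
  have hD0 : 0 ≤ D := setIntegral_nonneg hQmeas fun x _ => sq_nonneg _
  have hC0 : 0 ≤ C := by rw [hC]; positivity
  have hDCV : D = C * V := by
    rw [hC]; field_simp
  -- rewrite the goal integrals
  have eL : (∫ x in Q, (ε / 2 * g x ^ 2 + Wδ x (u x) / ε)) = ε / 2 * A + I₁ / ε := by
    rw [integral_add (hint1.const_mul _) (hint2.div_const _), integral_const_mul, integral_div]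
  have eR : (∫ x in Q, ((1 - cP * α) * ε / 2 * g x ^ 2 + Whom (u x) / ε))
      = (1 - cP * α) * ε / 2 * A + I₂ / ε := by
    rw [integral_add (hint1.const_mul _) (hint3.div_const _), integral_const_mul, integral_div]
  have eabs : (∫ x in Q, (Wδ x m - Whom m) / ε) = I₃ / ε := integral_div _ _
  rw [eL, eR, eabs, ge_iff_le, abs_div, abs_of_pos hε]
  -- combine
  have hB' : t / 2 * B ≤ α * ε ^ 2 * cP / 2 * A := by
    have h := mul_le_mul_of_nonneg_left hPoincare (by positivity : (0:ℝ) ≤ t / 2)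
    calc t / 2 * B ≤ t / 2 * (cP * δ ^ 2 * A) := h
      _ = α * ε ^ 2 * cP / 2 * A := by
          rw [ht_def]; field_simp
  have h3 : -|I₃| ≤ I₃ := neg_abs_le _
  have h4 : I₂ - |I₃| - D / (2 * t) - α * ε ^ 2 * cP / 2 * A ≤ I₁ := by linarith
  have h4' : (I₂ - |I₃| - D / (2 * t) - α * ε ^ 2 * cP / 2 * A) / ε ≤ I₁ / ε :=
    (div_le_div_iff_of_pos_right hε).mpr h4
  have hsplit : (I₂ - |I₃| - D / (2 * t) - α * ε ^ 2 * cP / 2 * A) / ε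
      = I₂ / ε - |I₃| / ε - C * V * δ ^ 2 / (2 * α * ε ^ 3) - cP * α * ε / 2 * A := by
    rw [hDCV, ht_def]; field_simp
  rw [hsplit] at h4'
  have hhalf : C * V * δ ^ 2 / (2 * α * ε ^ 3) ≤ C * (δ / ε) ^ 2 * (1 / (α * ε)) * V := by
    have he : C * (δ / ε) ^ 2 * (1 / (α * ε)) * V = C * V * δ ^ 2 / (α * ε ^ 3) := by
      field_simp
    rw [he]
    have h0 : 0 ≤ C * V * δ ^ 2 := by positivity
    have hd : α * ε ^ 3 ≤ 2 * α * ε ^ 3 := by linarith [mul_pos hα (pow_pos hε 3)]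
    exact div_le_div_of_nonneg_left h0 (by positivity) hd
  have e1 : (1 - cP * α) * ε / 2 * A = ε / 2 * A - cP * α * ε / 2 * A := by ring
  linarith [h4', hhalf, e1]
end

section
/- Let W_hom : ℝ → [0,∞) be Lipschitz on [-1,1] with W_hom(±1) = 0 and W_hom > 0 on (-1,1). Any solution φ : ℝ → [-1,1] of the ODE φ' = √(2 W_hom(φ)) with φ(0) = 0 is monotone increasing, Lipschitz-continuous with Lipschitz constant at most max_{u∈[-1,1]} √(2 W_hom(u)), and satisfies lim_{x→±∞} φ(x) = ±1. -/
open Real Filter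

lemma aux_top (Whom : ℝ → ℝ) (φ : ℝ → ℝ)
    (hWcont : ContinuousOn Whom (Set.Icc (-1) 1))
    (hWpos : ∀ v ∈ Set.Ioo (-1 : ℝ) 1, 0 < Whom v)
    (hφrange : ∀ x, φ x ∈ Set.Icc (-1 : ℝ) 1)
    (hφ : ∀ x, HasDerivAt φ (Real.sqrt (2 * Whom (φ x))) x)
    (hφ0 : φ 0 = 0) :
    Tendsto φ atTop (nhds 1) := by
  have hmono : Monotone φ :=
    monotone_of_deriv_nonneg (fun x => (hφ x).differentiableAt)
      (fun x => by rw [(hφ x).deriv]; exact Real.sqrt_nonneg _)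
  have hbdd : BddAbove (Set.range φ) := ⟨1, by rintro _ ⟨x, rfl⟩; exact (hφrange x).2⟩
  have htend : Tendsto φ atTop (nhds (⨆ x, φ x)) := tendsto_atTop_ciSup hmono hbdd
  set L := ⨆ x, φ x with hLdef
  have hL1 : L ≤ 1 := ciSup_le fun x => (hφrange x).2
  have hLle : ∀ x, φ x ≤ L := fun x => le_ciSup hbdd x
  have hL0 : (0 : ℝ) ≤ L := hφ0 ▸ hLle 0
  rcases eq_or_lt_of_le hL1 with h | hlt
  · rwa [h] at htend
  · exfalso
    have hKsub : Set.Icc (0 : ℝ) L ⊆ Set.Ioo (-1 : ℝ) 1 := fun u hu =>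
      ⟨lt_of_lt_of_le (by norm_num) hu.1, lt_of_le_of_lt hu.2 hlt⟩
    have hKsub' : Set.Icc (0 : ℝ) L ⊆ Set.Icc (-1 : ℝ) 1 := fun u hu =>
      ⟨(hKsub hu).1.le, (hKsub hu).2.le⟩
    have hcont : ContinuousOn (fun u => Real.sqrt (2 * Whom u)) (Set.Icc 0 L) :=
      Real.continuous_sqrt.comp_continuousOn
        ((continuousOn_const.mul (hWcont.mono hKsub')))
    obtain ⟨u₀, hu₀K, hmin⟩ := isCompact_Icc.exists_isMinOn
      ⟨0, Set.left_mem_Icc.mpr hL0⟩ hcont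
    set δ := Real.sqrt (2 * Whom u₀) with hδdef
    have hδpos : 0 < δ := Real.sqrt_pos.mpr (by
      have := hWpos u₀ (hKsub hu₀K); linarith)
    -- g x = φ x - δ x is monotone on [0, ∞)
    have hg : ∀ x, HasDerivAt (fun x => φ x - δ * x) (Real.sqrt (2 * Whom (φ x)) - δ) x := by
      intro x
      have h2 : HasDerivAt (fun x : ℝ => δ * x) (δ * 1) x := (hasDerivAt_id x).const_mul δ
      exact ((hφ x).sub h2).congr_deriv (by ring)
    have hgmono : MonotoneOn (fun x => φ x - δ * x) (Set.Ici 0) := by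
      apply monotoneOn_of_deriv_nonneg (convex_Ici 0)
      · have hφdiff : Differentiable ℝ φ := fun x => (hφ x).differentiableAt
        exact (hφdiff.continuous.sub (continuous_const.mul continuous_id)).continuousOn
      · intro x _; exact (hg x).differentiableAt.differentiableWithinAt
      · intro x hx
        rw [(hg x).deriv]
        have hx0 : (0 : ℝ) ≤ x := le_of_lt (by simpa [interior_Ici] using hx)
        have hφxK : φ x ∈ Set.Icc (0 : ℝ) L := ⟨hφ0 ▸ hmono hx0, hLle x⟩
        have := isMinOn_iff.mp hmin _ hφxK
        simpa [hδdef] using sub_nonneg.mpr this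
    have hkey : ∀ x : ℝ, 0 ≤ x → δ * x ≤ φ x := by
      intro x hx
      have := hgmono Set.self_mem_Ici (Set.mem_Ici.mpr hx) hx
      simp only [hφ0, mul_zero, sub_zero] at this
      linarith
    have h2 : δ * (2 / δ) ≤ φ (2 / δ) := hkey _ (by positivity)
    rw [mul_div_cancel₀ _ (ne_of_gt hδpos)] at h2
    have := (hφrange (2 / δ)).2
    linarith

/-- Properties of the optimal profile: a solution of `φ' = √(2 W_hom(φ))`, `φ(0)=0`,
with values in `[-1,1]` is monotone increasing, Lipschitz with constant
`max_{u ∈ [-1,1]} √(2 W_hom(u))`, and tends to `±1` at `±∞`. -/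
theorem stmt7 (Whom : ℝ → ℝ) (φ : ℝ → ℝ)
    (hWlip : ∃ K : NNReal, LipschitzOnWith K Whom (Set.Icc (-1) 1))
    (hWnonneg : ∀ v, 0 ≤ Whom v)
    (hW1 : Whom (-1) = 0) (hW2 : Whom 1 = 0)
    (hWpos : ∀ v ∈ Set.Ioo (-1 : ℝ) 1, 0 < Whom v)
    (hφrange : ∀ x, φ x ∈ Set.Icc (-1 : ℝ) 1)
    (hφ : ∀ x, HasDerivAt φ (Real.sqrt (2 * Whom (φ x))) x)
    (hφ0 : φ 0 = 0) :
    Monotone φ ∧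
    LipschitzWith (Real.toNNReal (⨆ u ∈ Set.Icc (-1 : ℝ) 1, Real.sqrt (2 * Whom u))) φ ∧
    Tendsto φ atTop (nhds 1) ∧ Tendsto φ atBot (nhds (-1)) := by
  obtain ⟨K, hK⟩ := hWlip
  have hWcont : ContinuousOn Whom (Set.Icc (-1) 1) := hK.continuousOn
  have hmono : Monotone φ :=
    monotone_of_deriv_nonneg (fun x => (hφ x).differentiableAt)
      (fun x => by rw [(hφ x).deriv]; exact Real.sqrt_nonneg _)
  -- Lipschitz part
  have hfcont : ContinuousOn (fun u => Real.sqrt (2 * Whom u)) (Set.Icc (-1 : ℝ) 1) :=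
    Real.continuous_sqrt.comp_continuousOn (continuousOn_const.mul hWcont)
  obtain ⟨u₁, hu₁, hmax⟩ := isCompact_Icc.exists_isMaxOn
    ⟨0, by norm_num⟩ hfcont
  set M := ⨆ u ∈ Set.Icc (-1 : ℝ) 1, Real.sqrt (2 * Whom u) with hMdef
  have hbddM : BddAbove (Set.range fun u => ⨆ _ : u ∈ Set.Icc (-1 : ℝ) 1,
      Real.sqrt (2 * Whom u)) := by
    refine ⟨Real.sqrt (2 * Whom u₁), ?_⟩
    rintro _ ⟨u, rfl⟩
    exact Real.iSup_le (fun hu => hmax hu) (Real.sqrt_nonneg _)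
  have hle : ∀ x, Real.sqrt (2 * Whom (φ x)) ≤ M := by
    intro x
    have h1 : (⨆ _ : φ x ∈ Set.Icc (-1 : ℝ) 1, Real.sqrt (2 * Whom (φ x))) ≤ M :=
      le_ciSup hbddM (φ x)
    rwa [ciSup_pos (hφrange x)] at h1
  have hlip : LipschitzWith (Real.toNNReal M) φ := by
    apply lipschitzWith_of_nnnorm_deriv_le (fun x => (hφ x).differentiableAt)
    intro x
    rw [(hφ x).deriv]
    have h1 : (‖√(2 * Whom (φ x))‖₊ : ℝ) ≤ (M.toNNReal : ℝ) := by
      rw [coe_nnnorm, Real.norm_of_nonneg (Real.sqrt_nonneg _)]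
      exact (hle x).trans (Real.le_coe_toNNReal M)
    exact_mod_cast h1
  refine ⟨hmono, hlip, aux_top Whom φ hWcont hWpos hφrange hφ hφ0, ?_⟩
  -- atBot: apply aux_top to the reflection
  have hrefl : Tendsto (fun x => -φ (-x)) atTop (nhds 1) := by
    apply aux_top (fun v => Whom (-v)) (fun x => -φ (-x))
    · exact hWcont.comp continuousOn_neg (fun v hv => ⟨by linarith [hv.2], by linarith [hv.1]⟩)
    · intro v hv; exact hWpos (-v) ⟨by linarith [hv.2], by linarith [hv.1]⟩
    · intro x; have := hφrange (-x); exact ⟨by linarith [this.2], by linarith [this.1]⟩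
    · intro x
      have h1 : HasDerivAt (fun x => φ (-x)) (Real.sqrt (2 * Whom (φ (-x))) * (-1)) x :=
        (hφ (-x)).comp x (hasDerivAt_neg x)
      have h2 := h1.neg
      exact h2.congr_deriv (by ring)
    · simp [hφ0]
  have h3 : Tendsto (fun x => -φ x) atBot (nhds 1) := by
    have := hrefl.comp tendsto_neg_atBot_atTop
    simpa [Function.comp_def] using this
  have h4 := h3.neg
  simpa using h4
end
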